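/- Let (A,σ) be a difference ring such that const(A,σ) is a field, let β ∈ A, and let A[t] be the S-extension of (A,σ) with σ(t) = t + β. Then const(A[t],σ) = const(A,σ) (i.e., every f ∈ A[t] with σ(f) = f is a constant polynomial whose coefficient lies in const(A,σ)) if and only if there is no g ∈ A with σ(g) = g + β. -/

import Mathlib

open Polynomial

/-- Key coefficient formula for the S-extension automorphism. -/
private lemma key_coeff {A : Type*} [CommRing A]
    (σ : A ≃+* A) (β : A) (σ' : Polynomial A ≃+* Polynomial A)
    (hC : ∀ a : A, σ' (Polynomial.C a) = Polynomial.C (σ a))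
    (hX : σ' Polynomial.X = Polynomial.X + Polynomial.C β)
    (p : Polynomial A) (k : ℕ) :
    (σ' p).coeff k =
      ∑ i ∈ Finset.range (p.natDegree + 1),
        σ (p.coeff i) * β ^ (i - k) * (i.choose k : A) := by
  have hkey : σ' p = p.eval₂ ((Polynomial.C : A →+* Polynomial A).comp (σ : A →+* A))
      (Polynomial.X + Polynomial.C β) := by
    induction p using Polynomial.induction_on' with
    | add p q hp hq => rw [map_add, hp, hq, eval₂_add]
    | monomial n a =>
        rw [← C_mul_X_pow_eq_monomial, map_mul, map_pow, hC, hX, eval₂_mul, eval₂_pow,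
          eval₂_C, eval₂_X, RingHom.comp_apply, RingEquiv.coe_toRingHom]
  rw [hkey, eval₂_eq_sum, Polynomial.sum_def]
  simp only [RingHom.comp_apply, RingEquiv.coe_toRingHom]
  rw [Finset.sum_subset p.supp_subset_range_natDegree_succ (by
    intro i _ hi
    rw [Polynomial.notMem_support_iff.mp hi, map_zero, map_zero, zero_mul])]
  rw [finset_sum_coeff]
  refine Finset.sum_congr rfl fun i _ => ?_
  rw [coeff_C_mul, coeff_X_add_C_pow, mul_assoc]

/-- Let `(A,σ)` be a difference ring whose ring of constants is a field,
let `β ∈ A`, and let `A[t]` be the S-extension of `(A,σ)` with `σ(t) = t + β`.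
Then `const(A[t],σ) = const(A,σ)` iff there is no `g ∈ A` with `σ(g) = g + β`. -/
theorem stmt0 {A : Type*} [CommRing A] [Algebra ℚ A] [Nontrivial A]
    (σ : A ≃+* A)
    (hK : ∀ c : A, σ c = c → c ≠ 0 → IsUnit c)
    (β : A)
    (σ' : Polynomial A ≃+* Polynomial A)
    (hC : ∀ a : A, σ' (Polynomial.C a) = Polynomial.C (σ a))
    (hX : σ' Polynomial.X = Polynomial.X + Polynomial.C β) :
    (∀ f : Polynomial A, σ' f = f → ∃ c : A, σ c = c ∧ f = Polynomial.C c) ↔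
      ¬ ∃ g : A, σ g = g + β := by
  constructor
  · rintro h ⟨g, hg⟩
    have hf : σ' (Polynomial.X - Polynomial.C g) = Polynomial.X - Polynomial.C g := by
      rw [map_sub, hX, hC, hg, map_add]; ring
    obtain ⟨c, _, hc⟩ := h _ hf
    have h1 := congrArg (fun p => Polynomial.coeff p 1) hc
    simp at h1
  · intro hng f hf
    by_cases hn : f.natDegree = 0
    · refine ⟨f.coeff 0, ?_, Polynomial.eq_C_of_natDegree_eq_zero hn⟩
      have h0 : f = Polynomial.C (f.coeff 0) := Polynomial.eq_C_of_natDegree_eq_zero hn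
      have h1 : σ' (Polynomial.C (f.coeff 0)) = Polynomial.C (f.coeff 0) := by
        rw [← h0, hf]
      rw [hC] at h1
      exact Polynomial.C_injective h1
    · exfalso
      obtain ⟨m, hm⟩ : ∃ m, f.natDegree = m + 1 :=
        ⟨f.natDegree - 1, (Nat.succ_pred_eq_of_pos (Nat.pos_of_ne_zero hn)).symm⟩
      have hfne : f ≠ 0 := fun h => hn (by simp [h])
      set a := f.coeff (m + 1) with ha
      set b := f.coeff m with hb
      have hane : a ≠ 0 := by
        have := Polynomial.leadingCoeff_ne_zero.mpr hfne
        rwa [Polynomial.leadingCoeff, hm] at this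
      -- leading coefficient is fixed
      have h1 : σ a = a := by
        have hkc := key_coeff σ β σ' hC hX f (m + 1)
        rw [hf, hm, Finset.sum_range_succ] at hkc
        have hz : ∀ i ∈ Finset.range (m + 1),
            σ (f.coeff i) * β ^ (i - (m + 1)) * (i.choose (m + 1) : A) = 0 := by
          intro i hi
          rw [Nat.choose_eq_zero_of_lt (Finset.mem_range.mp hi), Nat.cast_zero, mul_zero]
        rw [Finset.sum_eq_zero hz, zero_add, Nat.sub_self, pow_zero, mul_one,
          Nat.choose_self, Nat.cast_one, mul_one] at hkc
        exact hkc.symm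
      -- subleading coefficient equation
      have h2 : b = σ b + a * (((m + 1 : ℕ) : A) * β) := by
        have hkc := key_coeff σ β σ' hC hX f m
        rw [hf, hm, Finset.sum_range_succ, Finset.sum_range_succ] at hkc
        have hz : ∀ i ∈ Finset.range m,
            σ (f.coeff i) * β ^ (i - m) * (i.choose m : A) = 0 := by
          intro i hi
          rw [Nat.choose_eq_zero_of_lt (Finset.mem_range.mp hi), Nat.cast_zero, mul_zero]
        rw [Finset.sum_eq_zero hz, zero_add, Nat.sub_self, pow_zero, mul_one,
          Nat.choose_self, Nat.cast_one, mul_one, Nat.add_sub_cancel_left, pow_one,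
          Nat.choose_succ_self_right] at hkc
        rw [hb, ha]
        conv_lhs => rw [hkc]
        rw [show σ (f.coeff (m + 1)) = f.coeff (m + 1) from h1]
        ring
      set c : A := ((m + 1 : ℕ) : A) * a with hcdef
      -- c is a fixed unit
      have hc1 : σ c = c := by rw [hcdef, map_mul, map_natCast, h1]
      have hnA : IsUnit ((m + 1 : ℕ) : A) := by
        refine IsUnit.of_mul_eq_one (algebraMap ℚ A (((m + 1 : ℕ) : ℚ))⁻¹) ?_
        rw [show (((m + 1 : ℕ) : A)) = algebraMap ℚ A ((m + 1 : ℕ) : ℚ) from (map_natCast _ _).symm,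
          ← map_mul, mul_inv_cancel₀ (Nat.cast_ne_zero.mpr (Nat.succ_ne_zero m)), map_one]
      have hcne : c ≠ 0 := by
        intro h
        obtain ⟨w, hw⟩ := hnA
        apply hane
        have h' := congrArg (fun x => (↑w⁻¹ : A) * x) h
        simp only [mul_zero] at h'
        rw [← h', hcdef, ← mul_assoc, ← hw, Units.inv_mul, one_mul]
      obtain ⟨u, hu⟩ := hK c hc1 hcne
      set v : A := ↑u⁻¹ with hvdef
      have hvu : v * c = 1 := by rw [hvdef, ← hu]; exact u.inv_mul
      have hcv : c * v = 1 := by rw [mul_comm]; exact hvu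
      have hinv : σ v = v := by
        have hs : σ v * c = 1 := by rw [← hc1, ← map_mul, hvu, map_one]
        calc σ v = σ v * (c * v) := by rw [hcv, mul_one]
          _ = (σ v * c) * v := by ring
          _ = v := by rw [hs, one_mul]
      apply hng
      refine ⟨-b * v, ?_⟩
      have hσb : σ b = b - a * (((m + 1 : ℕ) : A) * β) := eq_sub_of_add_eq h2.symm
      rw [map_mul, map_neg, hinv, hσb]
      calc -(b - a * (((m + 1 : ℕ) : A) * β)) * v
          = -b * v + β * (v * c) := by rw [hcdef]; ring
        _ = -b * v + β := by rw [hvu, mul_one]
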